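/- arXiv:2509.07598 — 6 statements merged into one kernel-verified Lean document; each statement's English description precedes it below -/
import Mathlib

section
/- The improper integral over (0, ∞) of ln((1 + e^{-x})/(1 - e^{-x})) with respect to x equals π²/4. -/
open Real MeasureTheory Set Filter

/-- `∫ x in Ioi 0, exp (-b*x) = 1/b` for `b > 0`. -/
lemma integral_exp_neg_mul_Ioi_zero {b : ℝ} (hb : 0 < b) :
    ∫ x in Ioi (0:ℝ), Real.exp (-b * x) = 1 / b := by
  have h := integral_Ioi_of_hasDerivAt_of_tendsto (a := (0:ℝ))
      (f := fun x => -Real.exp (-b * x) / b) (f' := fun x => Real.exp (-b * x))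
      (m := 0) ?_ ?_ ?_ ?_
  · rw [h]; simp [neg_div]
  · exact (((Real.continuous_exp.comp (continuous_const.mul continuous_id)).neg).div_const
      b).continuousWithinAt
  · intro x _
    have h1 : HasDerivAt (fun x : ℝ => -b * x) (-b) x := by
      simpa using (hasDerivAt_id x).const_mul (-b)
    have h2 := ((Real.hasDerivAt_exp (-b * x)).comp x h1).neg.div_const b
    have h3 : -(Real.exp (-b * x) * -b) / b = Real.exp (-b * x) := by
      field_simp
    rw [h3] at h2
    exact h2
  · exact exp_neg_integrableOn_Ioi 0 hb
  · have h1 : Tendsto (fun x : ℝ => b * x) atTop atTop := tendsto_id.const_mul_atTop hb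
    have h2 : Tendsto (fun x : ℝ => Real.exp (-b * x)) atTop (nhds 0) := by
      simpa using h1
    simpa [neg_div] using h2.neg.div_const b

lemma hasSum_odd_inv_sq : HasSum (fun k : ℕ => (1:ℝ) / (2*k+1)^2) (π^2/8) := by
  have htot : HasSum (fun n : ℕ => (1:ℝ)/(n:ℝ)^2) (π^2/6) := hasSum_zeta_two
  have heven : HasSum (fun k : ℕ => (1:ℝ)/(((2*k:ℕ)):ℝ)^2) (π^2/24) := by
    have h := htot.mul_left (1/4)
    have e : ∀ k : ℕ, (1:ℝ)/(((2*k:ℕ)):ℝ)^2 = 1/4 * (1/(k:ℝ)^2) := fun k => by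
      push_cast; ring
    simp only [e]
    have e2 : (π^2/24 : ℝ) = 1/4 * (π^2/6) := by ring
    rw [e2]; exact h
  have hsummo : Summable (fun k : ℕ => (1:ℝ)/((2*k+1:ℕ):ℝ)^2) :=
    htot.summable.comp_injective (fun i j h => by omega)
  obtain ⟨s, hs⟩ := hsummo
  have htot' := HasSum.even_add_odd (f := fun n : ℕ => (1:ℝ)/(n:ℝ)^2) heven hs
  have hseq : π^2/6 = π^2/24 + s := htot.unique htot'
  have hsval : s = π^2/8 := by linarith
  rw [hsval] at hs
  have e3 : ∀ k : ℕ, (1:ℝ)/((2*k+1:ℕ):ℝ)^2 = (1:ℝ)/(2*(k:ℝ)+1)^2 := fun k => by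
    push_cast; ring
  simpa only [e3] using hs

theorem integral_fundamental_form :
    ∫ x in Set.Ioi (0:ℝ), Real.log ((1 + Real.exp (-x)) / (1 - Real.exp (-x)))
      = Real.pi ^ 2 / 4 := by
  set F : ℕ → ℝ → ℝ := fun k x => 2 * (1 / (2 * (k:ℝ) + 1)) * Real.exp (-(2 * (k:ℝ) + 1) * x) with hF
  have hbpos : ∀ k : ℕ, (0:ℝ) < 2 * (k:ℝ) + 1 := fun k => by positivity
  have hpt : ∀ x ∈ Ioi (0:ℝ),
      Real.log ((1 + Real.exp (-x)) / (1 - Real.exp (-x))) = ∑' k, F k x := by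
    intro x hx
    have hx0 : (0:ℝ) < x := hx
    have ht1 : Real.exp (-x) < 1 := by
      rw [Real.exp_lt_one_iff]; linarith
    have ht0 : 0 < Real.exp (-x) := Real.exp_pos _
    have habs : |Real.exp (-x)| < 1 := by rw [abs_of_pos ht0]; exact ht1
    have hsum := Real.hasSum_log_sub_log_of_abs_lt_one habs
    have hlog : Real.log ((1 + Real.exp (-x)) / (1 - Real.exp (-x)))
        = Real.log (1 + Real.exp (-x)) - Real.log (1 - Real.exp (-x)) :=
      Real.log_div (by positivity) (by linarith)
    rw [hlog, ← hsum.tsum_eq]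
    congr 1 with k
    simp only [hF]
    rw [← Real.exp_nat_mul]
    push_cast
    ring_nf
  have hint : ∀ k : ℕ, ∫ x in Ioi (0:ℝ), F k x = 2 * (1 / (2 * (k:ℝ) + 1)^2) := by
    intro k
    simp only [hF]
    rw [MeasureTheory.integral_const_mul, integral_exp_neg_mul_Ioi_zero (hbpos k)]
    have hne : (2*(k:ℝ)+1) ≠ 0 := (hbpos k).ne'
    field_simp
  have hFint : ∀ k : ℕ, Integrable (F k) (volume.restrict (Ioi (0:ℝ))) := by
    intro k
    exact ((exp_neg_integrableOn_Ioi 0 (hbpos k)).const_mul _)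
  have hnorm : ∀ k : ℕ, ∫ x in Ioi (0:ℝ), ‖F k x‖ = 2 * (1 / (2 * (k:ℝ) + 1)^2) := by
    intro k
    rw [← hint k]
    apply setIntegral_congr_fun measurableSet_Ioi
    intro x hx
    simp only [hF]
    rw [Real.norm_of_nonneg (by positivity)]
  have hsummable : Summable (fun k : ℕ => ∫ x in Ioi (0:ℝ), ‖F k x‖) := by
    simp_rw [hnorm]
    exact (hasSum_odd_inv_sq.mul_left 2).summable
  have key := MeasureTheory.integral_tsum_of_summable_integral_norm hFint hsummable
  calc ∫ x in Set.Ioi (0:ℝ), Real.log ((1 + Real.exp (-x)) / (1 - Real.exp (-x)))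
      = ∫ x in Ioi (0:ℝ), ∑' k, F k x :=
        setIntegral_congr_fun measurableSet_Ioi hpt
    _ = ∑' k, ∫ x in Ioi (0:ℝ), F k x := key.symm
    _ = ∑' k : ℕ, 2 * (1 / (2 * (k:ℝ) + 1)^2) := by simp_rw [hint]
    _ = π ^ 2 / 4 := by
        rw [(hasSum_odd_inv_sq.mul_left 2).tsum_eq]; ring
end

section
/- The improper integral over (0, ∞) of ln(1/(1 - e^{-x})) with respect to x equals π²/6. -/
open Real MeasureTheory

lemma aux_exp_int {c : ℝ} (hc : 0 < c) :
    ∫ x in Set.Ioi (0:ℝ), Real.exp (-(c*x)) = 1/c := by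
  have := MeasureTheory.integral_comp_mul_left_Ioi (fun x => Real.exp (-x)) 0 hc
  simp only [mul_zero] at this
  rw [this, integral_exp_neg_Ioi, neg_zero, Real.exp_zero, smul_eq_mul, mul_one, one_div]

lemma aux_rw (n : ℕ) (x : ℝ) :
    Real.exp (-x) ^ (n+1) / ((n:ℝ)+1) = (((n:ℝ)+1)⁻¹) * Real.exp (-(((n:ℝ)+1)*x)) := by
  rw [← Real.exp_nat_mul, div_eq_inv_mul]
  push_cast
  ring_nf

lemma aux_term_int (n : ℕ) :
    ∫ x in Set.Ioi (0:ℝ), Real.exp (-x) ^ (n+1) / ((n:ℝ)+1)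
      = 1 / ((n:ℝ)+1)^2 := by
  have hc : (0:ℝ) < (n:ℝ) + 1 := by positivity
  simp only [aux_rw]
  rw [MeasureTheory.integral_const_mul, aux_exp_int hc]
  field_simp

lemma aux_integrable (n : ℕ) :
    IntegrableOn (fun x : ℝ => Real.exp (-x) ^ (n+1) / ((n:ℝ)+1)) (Set.Ioi (0:ℝ)) := by
  have hc : (0:ℝ) < (n:ℝ) + 1 := by positivity
  simp only [aux_rw]
  have := (exp_neg_integrableOn_Ioi 0 hc).const_mul (((n:ℝ)+1)⁻¹)
  exact this.congr (Filter.Eventually.of_forall fun x => by ring_nf)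

lemma aux_hasSum : HasSum (fun n : ℕ => (1:ℝ) / ((n:ℝ)+1)^2) (Real.pi ^ 2 / 6) := by
  have h3 := (hasSum_nat_add_iff' (f := fun n : ℕ => (1:ℝ)/(n:ℝ)^2) 1).mpr hasSum_zeta_two
  simp only [Finset.range_one, Finset.sum_singleton, Nat.cast_zero] at h3
  norm_num at h3
  have : ∀ n : ℕ, (1:ℝ)/((n+1:ℕ):ℝ)^2 = 1/((n:ℝ)+1)^2 := fun n => by push_cast; ring
  simpa [this] using h3

theorem integral_degenerate_form :
    ∫ x in Set.Ioi (0:ℝ), Real.log (1 / (1 - Real.exp (-x)))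
      = Real.pi ^ 2 / 6 := by
  have key : ∀ x ∈ Set.Ioi (0:ℝ),
      Real.log (1 / (1 - Real.exp (-x))) = ∑' n : ℕ, Real.exp (-x) ^ (n+1) / ((n:ℝ)+1) := by
    intro x hx
    have hx' : Real.exp (-x) < 1 := Real.exp_lt_one_iff.mpr (by simpa using hx.out)
    have habs : |Real.exp (-x)| < 1 := by
      rw [abs_of_pos (Real.exp_pos _)]; exact hx'
    rw [one_div, Real.log_inv]
    exact ((hasSum_pow_div_log_of_abs_lt_one habs).tsum_eq).symm
  rw [MeasureTheory.setIntegral_congr_fun measurableSet_Ioi key,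
    MeasureTheory.integral_tsum]
  · calc ∑' n : ℕ, ∫ x in Set.Ioi (0:ℝ), Real.exp (-x) ^ (n+1) / ((n:ℝ)+1)
        = ∑' n : ℕ, (1:ℝ) / ((n:ℝ)+1)^2 := tsum_congr fun n => aux_term_int n
      _ = Real.pi ^ 2 / 6 := aux_hasSum.tsum_eq
  · intro n
    exact (aux_integrable n).aestronglyMeasurable
  · have h1 : ∀ n : ℕ, ∫⁻ x in Set.Ioi (0:ℝ), ‖Real.exp (-x) ^ (n+1) / ((n:ℝ)+1)‖ₑ
        = ENNReal.ofReal (1 / ((n:ℝ)+1)^2) := by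
      intro n
      have he : ∫⁻ x in Set.Ioi (0:ℝ), (‖Real.exp (-x) ^ (n+1) / ((n:ℝ)+1)‖ₑ : ENNReal)
          = ∫⁻ x in Set.Ioi (0:ℝ), ENNReal.ofReal (Real.exp (-x) ^ (n+1) / ((n:ℝ)+1)) :=
        lintegral_congr fun x => Real.enorm_eq_ofReal (by positivity)
      rw [he, ← MeasureTheory.ofReal_integral_eq_lintegral_ofReal (aux_integrable n)
        (Filter.Eventually.of_forall fun x => by dsimp; positivity), aux_term_int n]
    simp only [h1]
    rw [← ENNReal.ofReal_tsum_of_nonneg (fun n => by positivity) aux_hasSum.summable]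
    exact ENNReal.ofReal_ne_top
end

section
/- For every real x > 1 and every real a ≥ -1, the five-term dilogarithm identity holds: Li₂(-a/x) - Li₂(1/x) + π²/6 - Li₂(-a) - ln(x)·ln((x+a)/(x-1)) = -Li₂(-a·(x-1)/(x+a)) + Li₂((x-1)/(x+a)). -/
open Real MeasureTheory

noncomputable def Li2 (x : ℝ) : ℝ := -∫ t in (0:ℝ)..x, Real.log (1 - t) / t

open Set Filter Topology intervalIntegral

noncomputable def gg (t : ℝ) : ℝ := if t = 0 then 1 else -(Real.log (1 - t) / t)

lemma gg_contAt {t : ℝ} (ht : t < 1) : ContinuousAt gg t := by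
  rcases eq_or_ne t 0 with rfl | h0
  · have hd : HasDerivAt (fun s : ℝ => -Real.log (1 - s)) 1 0 := by
      have h1 : HasDerivAt (fun s : ℝ => (1:ℝ) - s) (-1) 0 := by
        simpa using (hasDerivAt_id (0:ℝ)).const_sub 1
      have := (Real.hasDerivAt_log (by norm_num : (1:ℝ) - 0 ≠ 0)).comp 0 h1
      exact this.neg.congr_deriv (by norm_num)
    have hs : Tendsto (slope (fun s : ℝ => -Real.log (1 - s)) 0) (𝓝[≠] 0) (𝓝 1) :=
      hasDerivAt_iff_tendsto_slope.mp hd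
    have heq : ∀ s : ℝ, s ≠ 0 → slope (fun s : ℝ => -Real.log (1 - s)) 0 s = gg s := by
      intro s hs0
      simp only [slope, gg, if_neg hs0, vsub_eq_sub, smul_eq_mul, sub_zero, Real.log_one, neg_zero]
      field_simp
    have h1 : Tendsto gg (𝓝[≠] 0) (𝓝 1) := by
      refine hs.congr' ?_
      filter_upwards [self_mem_nhdsWithin] with s hs0
      exact heq s hs0
    have h2 : Tendsto gg (pure (0:ℝ)) (𝓝 1) := by
      simpa [gg] using tendsto_pure_nhds gg 0 |>.congr (fun _ => rfl) |>.mono_right le_rfl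
    have : Tendsto gg (𝓝[≠] (0:ℝ) ⊔ pure 0) (𝓝 1) := h1.sup h2
    rw [nhdsNE_sup_pure] at this
    simpa [ContinuousAt, gg] using this
  · have hc : ContinuousAt (fun s : ℝ => -(Real.log (1 - s) / s)) t := by
      exact (((Real.continuousAt_log (by linarith : (1:ℝ) - t ≠ 0)).comp
        ((continuous_const.sub continuous_id).continuousAt)).div continuousAt_id h0).neg
    refine hc.congr ?_
    filter_upwards [isOpen_ne.mem_nhds h0] with s hs
    simp [gg, hs]

lemma gg_contOn : ContinuousOn gg (Iio 1) := fun t ht => (gg_contAt ht).continuousWithinAt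

lemma gg_intInt {c d : ℝ} (hc : c < 1) (hd : d < 1) : IntervalIntegrable gg volume c d := by
  apply ContinuousOn.intervalIntegrable
  refine gg_contOn.mono (fun s hs => ?_)
  simp only [Set.mem_Iio]
  have := hs.2
  have hm : max c d < 1 := max_lt hc hd
  calc s ≤ max c d := by simpa [Set.uIcc] using this
  _ < 1 := hm

lemma Li2_eq (x : ℝ) : Li2 x = ∫ t in (0:ℝ)..x, gg t := by
  rw [Li2, ← intervalIntegral.integral_neg]
  apply intervalIntegral.integral_congr_ae
  have h0 : ∀ᵐ t : ℝ, t ≠ 0 := by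
    rw [MeasureTheory.ae_iff]
    simpa using measure_singleton (0:ℝ)
  filter_upwards [h0] with t ht _
  simp [gg, ht]

lemma Li2_hasDerivAt {z : ℝ} (hz : z < 1) : HasDerivAt Li2 (gg z) z := by
  have h : HasDerivAt (fun u => ∫ t in (0:ℝ)..u, gg t) (gg z) z := by
    apply intervalIntegral.integral_hasDerivAt_right (gg_intInt one_pos hz)
    · exact ContinuousOn.stronglyMeasurableAtFilter isOpen_Iio gg_contOn z hz
    · exact gg_contAt hz
  have : Li2 = fun u => ∫ t in (0:ℝ)..u, gg t := funext Li2_eq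
  rw [this]
  exact h

lemma gg_meas : Measurable gg :=
  Measurable.ite (measurableSet_eq) measurable_const
    (((Real.measurable_log.comp (measurable_const.sub measurable_id)).div measurable_id).neg)

lemma negloglem : IntegrableOn (fun t : ℝ => -Real.log (1 - t)) (Ioc (1/2 : ℝ) 1) := by
  have hcont : ContinuousOn (fun t : ℝ => (1 - t) * Real.log (1 - t) + t) (Icc (1/2 : ℝ) 1) :=
    (((Real.continuous_mul_log.comp (continuous_const.sub continuous_id)).add
      continuous_id).continuousOn)
  refine integrableOn_deriv_of_nonneg hcont (fun t ht => ?_) (fun t ht => ?_)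
  · have h1t : (1:ℝ) - t ≠ 0 := by have := ht.2; intro h; nlinarith [ht.1]
    have hsub : HasDerivAt (fun s : ℝ => (1:ℝ) - s) (-1) t := by
      simpa using (hasDerivAt_id t).const_sub 1
    have h := (Real.hasDerivAt_mul_log h1t).comp t hsub
    have h2 := h.add (hasDerivAt_id t)
    exact h2.congr_deriv (by ring)
  · have : Real.log (1 - t) ≤ 0 := Real.log_nonpos (by linarith [ht.1, ht.2]) (by linarith [ht.1, ht.2])
    linarith

lemma gg_intOn_upper : IntegrableOn gg (Ioc (1/2 : ℝ) 1) := by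
  refine Integrable.mono (negloglem.const_mul 2) (gg_meas.aestronglyMeasurable.restrict) ?_
  filter_upwards [ae_restrict_mem measurableSet_Ioc] with t ht
  have ht1 : t ≠ 0 := by intro h; rw [h] at ht; norm_num at ht
  have hlog : Real.log (1 - t) ≤ 0 := Real.log_nonpos (by linarith [ht.1, ht.2]) (by linarith [ht.1, ht.2])
  have hggt : gg t = -Real.log (1 - t) / t := by simp [gg, ht1, neg_div]
  have h0 : 0 ≤ gg t := by rw [hggt]; exact div_nonneg (by linarith) (by linarith [ht.1])
  rw [Real.norm_of_nonneg h0, hggt]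
  have h2 : (0:ℝ) ≤ 2 * -Real.log (1 - t) := by linarith
  rw [Real.norm_of_nonneg h2]
  rw [div_le_iff₀ (by linarith [ht.1] : (0:ℝ) < t)]
  nlinarith [ht.1, ht.2]

lemma gg_intOn_01 : IntegrableOn gg (Icc (0:ℝ) 1) := by
  have h1 : IntegrableOn gg (Icc (0:ℝ) (1/2)) :=
    (gg_contOn.mono (fun s hs => lt_of_le_of_lt hs.2 (by norm_num))).integrableOn_compact
      isCompact_Icc
  have hsub : Icc (0:ℝ) 1 ⊆ Icc (0:ℝ) (1/2) ∪ Ioc (1/2) 1 := by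
    intro t ht
    rcases le_or_gt t (1/2) with h | h
    · exact Or.inl ⟨ht.1, h⟩
    · exact Or.inr ⟨h, ht.2⟩
  exact (h1.union gg_intOn_upper).mono_set hsub

lemma hasSum_gg {t : ℝ} (h0 : 0 < t) (h1 : t < 1) :
    HasSum (fun k : ℕ => t ^ k / (k + 1)) (gg t) := by
  have habs : |t| < 1 := by rw [abs_of_pos h0]; exact h1
  have h := (Real.hasSum_pow_div_log_of_abs_lt_one habs).div_const t
  have ht : t ≠ 0 := ne_of_gt h0
  have heq : (fun n : ℕ => t ^ (n + 1) / (n + 1) / t) = fun k : ℕ => t ^ k / (k + 1) := by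
    funext n
    field_simp [pow_succ]
    ring
  rw [heq] at h
  have : gg t = -Real.log (1 - t) / t := by simp [gg, ht, neg_div]
  rw [this]
  exact h

lemma integral_pow_Ioc (k : ℕ) :
    ∫ t in Ioc (0:ℝ) 1, t ^ k / (k + 1) = 1 / ((k : ℝ) + 1) ^ 2 := by
  rw [← intervalIntegral.integral_of_le zero_le_one]
  rw [intervalIntegral.integral_div, integral_pow]
  push_cast
  rw [one_pow]
  field_simp
  ring

lemma Li2_one : Li2 1 = Real.pi ^ 2 / 6 := by
  have hint : ∀ k : ℕ, Integrable (fun t : ℝ => t ^ k / (k + 1))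
      (volume.restrict (Ioc (0:ℝ) 1)) := by
    intro k
    exact ((continuous_pow k).div_const _).integrableOn_Ioc
  have hnorm : ∀ k : ℕ, (∫ t in Ioc (0:ℝ) 1, ‖t ^ k / ((k : ℝ) + 1)‖) = 1 / ((k : ℝ) + 1) ^ 2 := by
    intro k
    rw [← integral_pow_Ioc k]
    refine setIntegral_congr_fun measurableSet_Ioc (fun t ht => ?_)
    have h1 : (0:ℝ) ≤ t ^ k / ((k:ℝ) + 1) := div_nonneg (pow_nonneg (le_of_lt ht.1) k) (by positivity)
    rw [Real.norm_of_nonneg h1]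
  have hsummable : Summable (fun k : ℕ => (1:ℝ) / ((k : ℝ) + 1) ^ 2) := by
    have := (summable_nat_add_iff (f := fun n : ℕ => (1:ℝ) / (n : ℝ) ^ 2) 1).mpr
      (Real.summable_one_div_nat_pow.mpr one_lt_two)
    refine this.congr (fun n => ?_)
    push_cast
    ring_nf
  have key := MeasureTheory.hasSum_integral_of_summable_integral_norm
    (μ := volume.restrict (Ioc (0:ℝ) 1)) (F := fun (k : ℕ) (t : ℝ) => t ^ k / (k + 1))
    hint (by rw [funext hnorm]; exact hsummable)
  have hterms : (fun k : ℕ => ∫ t in Ioc (0:ℝ) 1, t ^ k / ((k:ℝ) + 1)) =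
      fun k : ℕ => 1 / ((k : ℝ) + 1) ^ 2 := funext integral_pow_Ioc
  rw [hterms] at key
  have hzeta : HasSum (fun k : ℕ => (1:ℝ) / ((k : ℝ) + 1) ^ 2) (Real.pi ^ 2 / 6) := by
    have h := (hasSum_nat_add_iff (f := fun n : ℕ => (1:ℝ) / (n : ℝ) ^ 2) 1).mpr
      (by simpa using hasSum_zeta_two)
    refine h.congr (fun n => ?_)
    push_cast
    ring
  have heqint : (∫ t in Ioc (0:ℝ) 1, ∑' k : ℕ, t ^ k / ((k:ℝ) + 1)) = ∫ t in Ioc (0:ℝ) 1, gg t := by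
    refine setIntegral_congr_ae measurableSet_Ioc ?_
    have hne1 : ∀ᵐ t : ℝ, t ≠ 1 := by
      rw [MeasureTheory.ae_iff]; simpa using measure_singleton (1:ℝ)
    filter_upwards [hne1] with t ht1 ht
    exact (hasSum_gg ht.1 (lt_of_le_of_ne ht.2 ht1)).tsum_eq
  rw [heqint] at key
  have := key.unique hzeta
  rw [Li2_eq, intervalIntegral.integral_of_le zero_le_one]
  exact this

lemma Li2_zero : Li2 0 = 0 := by
  rw [Li2_eq, intervalIntegral.integral_same]

lemma Li2_contOn : ContinuousOn Li2 (Icc (0:ℝ) 1) := by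
  have h := intervalIntegral.continuousOn_primitive_interval (a := (0:ℝ)) (b := 1)
    (μ := volume) (f := gg) (by simpa [uIcc_of_le (zero_le_one (α := ℝ))] using gg_intOn_01)
  have : Li2 = fun u => ∫ t in (0:ℝ)..u, gg t := funext Li2_eq
  rw [this]
  simpa [uIcc_of_le (zero_le_one (α := ℝ))] using h

section main
variable {a : ℝ}

/-- derivative of G is zero -/
lemma G_hasDerivAt (ha : -1 < a) {y : ℝ} (hy : 1 < y) :
    HasDerivAt (fun t => Li2 (-a/t) - Li2 (1/t) + Real.pi ^ 2 / 6 - Li2 (-a)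
      - Real.log t * (Real.log (t+a) - Real.log (t-1))
      + Li2 (-a*(t-1)/(t+a)) - Li2 ((t-1)/(t+a))) 0 y := by
  have hy0 : (0:ℝ) < y := by linarith
  have hy1 : (0:ℝ) < y - 1 := by linarith
  have hya : (0:ℝ) < y + a := by linarith
  have h1a : (0:ℝ) < 1 + a := by linarith
  -- D1
  have hz1 : -a/y < 1 := by
    rw [div_lt_one hy0]; linarith
  have c1 : HasDerivAt (fun t : ℝ => -a/t) (a/y^2) y := by
    have h2 : HasDerivAt (fun t : ℝ => -a/t) (-a * -(y^2)⁻¹) y := by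
      simpa [div_eq_mul_inv] using (hasDerivAt_inv hy0.ne').const_mul (-a)
    convert h2 using 1
    field_simp
  have D1 : HasDerivAt (fun t => Li2 (-a/t)) (gg (-a/y) * (a/y^2)) y :=
    (Li2_hasDerivAt hz1).comp y c1
  have e1 : gg (-a/y) * (a/y^2) = (Real.log (y+a) - Real.log y)/y := by
    rcases eq_or_ne a 0 with rfl | hane
    · simp [gg]
    · have hne : -a/y ≠ 0 := div_ne_zero (neg_ne_zero.mpr hane) hy0.ne'
      have h1z : (1:ℝ) - (-a/y) = (y+a)/y := by field_simp; try ring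
      simp only [gg, if_neg hne, h1z, Real.log_div hya.ne' hy0.ne']
      field_simp
  -- D2
  have hz2 : 1/y < 1 := by rw [div_lt_one hy0]; linarith
  have c2 : HasDerivAt (fun t : ℝ => 1/t) (-(y^2)⁻¹) y := by
    simpa [one_div] using hasDerivAt_inv hy0.ne'
  have D2 : HasDerivAt (fun t => Li2 (1/t)) (gg (1/y) * (-(y^2)⁻¹)) y :=
    (Li2_hasDerivAt hz2).comp y c2
  have e2 : gg (1/y) * (-(y^2)⁻¹) = (Real.log (y-1) - Real.log y)/y := by
    have hne : 1/y ≠ 0 := one_div_ne_zero hy0.ne'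
    have h1z : (1:ℝ) - 1/y = (y-1)/y := by field_simp
    simp only [gg, if_neg hne, h1z, Real.log_div hy1.ne' hy0.ne']
    field_simp
  -- D3 (product term)
  have dlog1 : HasDerivAt (fun t : ℝ => Real.log (t+a)) ((y+a)⁻¹) y := by
    have hi : HasDerivAt (fun t : ℝ => t + a) 1 y := (hasDerivAt_id y).add_const a
    have := (Real.hasDerivAt_log hya.ne').comp y hi
    simpa [Function.comp_def] using this
  have dlog2 : HasDerivAt (fun t : ℝ => Real.log (t-1)) ((y-1)⁻¹) y := by
    have hi : HasDerivAt (fun t : ℝ => t - 1) 1 y := (hasDerivAt_id y).sub_const 1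
    have := (Real.hasDerivAt_log hy1.ne').comp y hi
    simpa [Function.comp_def] using this
  have D3 : HasDerivAt (fun t => Real.log t * (Real.log (t+a) - Real.log (t-1)))
      (y⁻¹ * (Real.log (y+a) - Real.log (y-1)) +
        Real.log y * ((y+a)⁻¹ - (y-1)⁻¹)) y :=
    (Real.hasDerivAt_log hy0.ne').mul (dlog1.sub dlog2)
  -- D4
  have hz4 : -a*(y-1)/(y+a) < 1 := by
    rw [div_lt_one hya]
    nlinarith
  have c4 : HasDerivAt (fun t : ℝ => -a*(t-1)/(t+a)) (-(a*(1+a))/(y+a)^2) y := by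
    have hc : HasDerivAt (fun t : ℝ => -a*(t-1)) (-a) y := by
      have := ((hasDerivAt_id y).sub_const 1).const_mul (-a)
      simpa using this
    have hd : HasDerivAt (fun t : ℝ => t + a) 1 y := (hasDerivAt_id y).add_const a
    have := hc.div hd hya.ne'
    exact this.congr_deriv (by ring)
  have D4 : HasDerivAt (fun t => Li2 (-a*(t-1)/(t+a)))
      (gg (-a*(y-1)/(y+a)) * (-(a*(1+a))/(y+a)^2)) y :=
    HasDerivAt.comp (h₂ := Li2) (h := fun t : ℝ => -a*(t-1)/(t+a)) y (Li2_hasDerivAt hz4) c4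
  have e4 : gg (-a*(y-1)/(y+a)) * (-(a*(1+a))/(y+a)^2)
      = -((1+a)/((y-1)*(y+a))) * (Real.log y + Real.log (1+a) - Real.log (y+a)) := by
    rcases eq_or_ne a 0 with rfl | hane
    · simp [gg]
    · have hne : -a*(y-1)/(y+a) ≠ 0 :=
        div_ne_zero (mul_ne_zero (neg_ne_zero.mpr hane) hy1.ne') hya.ne'
      have h1z : (1:ℝ) - (-a*(y-1)/(y+a)) = y*(1+a)/(y+a) := by field_simp; try ring
      have hyla : (0:ℝ) < y * (1+a) := by positivity
      simp only [gg, if_neg hne, h1z, Real.log_div hyla.ne' hya.ne',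
        Real.log_mul hy0.ne' h1a.ne']
      field_simp
  -- D5
  have hz5 : (y-1)/(y+a) < 1 := by rw [div_lt_one hya]; linarith
  have c5 : HasDerivAt (fun t : ℝ => (t-1)/(t+a)) ((1+a)/(y+a)^2) y := by
    have hc : HasDerivAt (fun t : ℝ => t - 1) 1 y := (hasDerivAt_id y).sub_const 1
    have hd : HasDerivAt (fun t : ℝ => t + a) 1 y := (hasDerivAt_id y).add_const a
    have := hc.div hd hya.ne'
    exact this.congr_deriv (by ring)
  have D5 : HasDerivAt (fun t => Li2 ((t-1)/(t+a))) (gg ((y-1)/(y+a)) * ((1+a)/(y+a)^2)) y :=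
    HasDerivAt.comp (h₂ := Li2) (h := fun t : ℝ => (t-1)/(t+a)) y (Li2_hasDerivAt hz5) c5
  have e5 : gg ((y-1)/(y+a)) * ((1+a)/(y+a)^2)
      = -((1+a)/((y-1)*(y+a))) * (Real.log (1+a) - Real.log (y+a)) := by
    have hne : (y-1)/(y+a) ≠ 0 := div_ne_zero hy1.ne' hya.ne'
    have h1z : (1:ℝ) - (y-1)/(y+a) = (1+a)/(y+a) := by field_simp; try ring
    simp only [gg, if_neg hne, h1z, Real.log_div h1a.ne' hya.ne']
    field_simp
  -- assemble
  have Dtot := (((((D1.sub D2).add_const (Real.pi ^ 2 / 6)).sub_const (Li2 (-a))).sub D3).add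
    D4).sub D5
  refine Dtot.congr_deriv ?_
  rw [e1, e2, e4, e5]
  field_simp
  ring

end main

section main
variable {a : ℝ}

lemma G_tendsto (ha : -1 < a) :
    Tendsto (fun t => Li2 (-a/t) - Li2 (1/t) + Real.pi ^ 2 / 6 - Li2 (-a)
      - Real.log t * (Real.log (t+a) - Real.log (t-1))
      + Li2 (-a*(t-1)/(t+a)) - Li2 ((t-1)/(t+a))) (𝓝[>] (1:ℝ)) (𝓝 0) := by
  have h1a : (0:ℝ) < 1 + a := by linarith
  -- t1 : Li2 (-a/t) → Li2 (-a)
  have t1 : Tendsto (fun t : ℝ => Li2 (-a/t)) (𝓝[>] (1:ℝ)) (𝓝 (Li2 (-a))) := by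
    have hca : Tendsto (fun t : ℝ => -a/t) (𝓝 (1:ℝ)) (𝓝 (-a)) := by
      have h := (continuousAt_const.div continuousAt_id one_ne_zero :
        ContinuousAt (fun t : ℝ => -a/t) 1).tendsto
      convert h using 2
      · rfl
      · show -a = -a / 1; norm_num
    have hL : ContinuousAt Li2 (-a) := (Li2_hasDerivAt (by linarith : -a < 1)).continuousAt
    have := (hL.tendsto.comp hca).mono_left (nhdsWithin_le_nhds (s := Ioi (1:ℝ)))
    simpa [Function.comp_def] using this
  -- t2 : Li2 (1/t) → Li2 1
  have t2 : Tendsto (fun t : ℝ => Li2 (1/t)) (𝓝[>] (1:ℝ)) (𝓝 (Li2 1)) := by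
    have hcw : Tendsto Li2 (𝓝[Icc (0:ℝ) 1] 1) (𝓝 (Li2 1)) :=
      Li2_contOn 1 (by norm_num)
    refine hcw.comp ?_
    rw [tendsto_nhdsWithin_iff]
    constructor
    · have h := (continuousAt_const.div continuousAt_id one_ne_zero :
        ContinuousAt (fun t : ℝ => 1/t) 1).tendsto.mono_left (nhdsWithin_le_nhds (s := Ioi (1:ℝ)))
      convert h using 2
      · rfl
      · show (1:ℝ) = 1 / 1; norm_num
    · filter_upwards [self_mem_nhdsWithin] with t ht
      have ht1 : (1:ℝ) < t := ht
      constructor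
      · positivity
      · rw [div_le_one (by linarith)]; linarith
  -- t3 : log t * (log (t+a) - log (t-1)) → 0
  have t3 : Tendsto (fun t : ℝ => Real.log t * (Real.log (t+a) - Real.log (t-1)))
      (𝓝[>] (1:ℝ)) (𝓝 0) := by
    have ha1 : Tendsto (fun t : ℝ => Real.log t * Real.log (t+a)) (𝓝[>] (1:ℝ)) (𝓝 0) := by
      have hc : ContinuousAt (fun t : ℝ => Real.log t * Real.log (t+a)) 1 := by
        exact (Real.continuousAt_log one_ne_zero).mul
          ((Real.continuousAt_log (by linarith)).comp
            ((continuous_id.add continuous_const).continuousAt))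
      have := hc.tendsto.mono_left (nhdsWithin_le_nhds (s := Ioi (1:ℝ)))
      simpa using this
    have ha2 : Tendsto (fun t : ℝ => Real.log t * Real.log (t-1)) (𝓝[>] (1:ℝ)) (𝓝 0) := by
      have s1 : Tendsto (fun t : ℝ => Real.log t / (t - 1)) (𝓝[>] (1:ℝ)) (𝓝 1) := by
        have hd : HasDerivAt Real.log 1 1 := by
          simpa using Real.hasDerivAt_log one_ne_zero
        have := hasDerivAt_iff_tendsto_slope.mp hd
        have h2 := this.mono_left (nhdsWithin_mono 1 (fun t ht => ne_of_gt ht))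
        refine h2.congr' ?_
        filter_upwards [self_mem_nhdsWithin] with t ht
        simp [slope, Real.log_one, div_eq_inv_mul]
      have s2 : Tendsto (fun t : ℝ => (t - 1) * Real.log (t-1)) (𝓝[>] (1:ℝ)) (𝓝 0) := by
        have h0 : Tendsto (fun u : ℝ => Real.log u * u) (𝓝[>] (0:ℝ)) (𝓝 0) := by
          have := tendsto_log_mul_rpow_nhdsGT_zero one_pos
          refine this.congr' ?_
          filter_upwards [self_mem_nhdsWithin] with u hu
          rw [Real.rpow_one]
        have hsub : Tendsto (fun t : ℝ => t - 1) (𝓝[>] (1:ℝ)) (𝓝[>] (0:ℝ)) := by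
          rw [tendsto_nhdsWithin_iff]
          constructor
          · have h : Tendsto (fun t : ℝ => t - 1) (𝓝 (1:ℝ)) (𝓝 0) := by
              simpa using (continuous_sub_right (1:ℝ)).tendsto 1
            exact h.mono_left nhdsWithin_le_nhds
          · filter_upwards [self_mem_nhdsWithin] with t ht
            simpa [Set.mem_Ioi] using sub_pos.mpr (Set.mem_Ioi.mp ht)
        have := h0.comp hsub
        simp only [Function.comp_def] at this
        refine this.congr (fun t => ?_)
        ring
      have := s1.mul s2
      rw [one_mul] at this
      refine this.congr' ?_
      filter_upwards [self_mem_nhdsWithin] with t ht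
      have : t - 1 ≠ 0 := ne_of_gt (sub_pos.mpr ht)
      field_simp
    have := ha1.sub ha2
    rw [sub_zero] at this
    refine this.congr (fun t => ?_)
    ring
  -- t4, t5
  have t4 : Tendsto (fun t : ℝ => Li2 (-a*(t-1)/(t+a))) (𝓝[>] (1:ℝ)) (𝓝 0) := by
    have hca : Tendsto (fun t : ℝ => -a*(t-1)/(t+a)) (𝓝 (1:ℝ)) (𝓝 0) := by
      have hnum : Tendsto (fun t : ℝ => -a*(t-1)) (𝓝 (1:ℝ)) (𝓝 0) := by
        have h : Continuous (fun t : ℝ => -a*(t-1)) := continuous_const.mul (continuous_sub_right 1)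
        simpa using h.tendsto 1
      have hden : Tendsto (fun t : ℝ => t+a) (𝓝 (1:ℝ)) (𝓝 (1+a)) := by
        simpa using ((continuous_add_right a).tendsto 1)
      have h := hnum.div hden (by linarith); rw [zero_div] at h; exact h
    have hL : ContinuousAt Li2 0 := (Li2_hasDerivAt one_pos).continuousAt
    have := (hL.tendsto.comp hca).mono_left (nhdsWithin_le_nhds (s := Ioi (1:ℝ)))
    rw [Li2_zero] at this
    simpa [Function.comp_def] using this
  have t5 : Tendsto (fun t : ℝ => Li2 ((t-1)/(t+a))) (𝓝[>] (1:ℝ)) (𝓝 0) := by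
    have hca : Tendsto (fun t : ℝ => (t-1)/(t+a)) (𝓝 (1:ℝ)) (𝓝 0) := by
      have hnum : Tendsto (fun t : ℝ => t-1) (𝓝 (1:ℝ)) (𝓝 0) := by
        simpa using ((continuous_sub_right (1:ℝ)).tendsto 1)
      have hden : Tendsto (fun t : ℝ => t+a) (𝓝 (1:ℝ)) (𝓝 (1+a)) := by
        simpa using ((continuous_add_right a).tendsto 1)
      have h := hnum.div hden (by linarith); rw [zero_div] at h; exact h
    have hL : ContinuousAt Li2 0 := (Li2_hasDerivAt one_pos).continuousAt
    have := (hL.tendsto.comp hca).mono_left (nhdsWithin_le_nhds (s := Ioi (1:ℝ)))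
    rw [Li2_zero] at this
    simpa [Function.comp_def] using this
  have total := (((((t1.sub t2).add_const (Real.pi ^ 2 / 6)).sub_const (Li2 (-a))).sub t3).add
    t4).sub t5
  convert total using 2
  rw [Li2_one]
  ring

end main

theorem five_term_gemini (x a : ℝ) (hx : 1 < x) (ha : -1 ≤ a) :
    Li2 (-a / x) - Li2 (1 / x) + Real.pi ^ 2 / 6 - Li2 (-a)
      - Real.log x * Real.log ((x + a) / (x - 1))
      = -Li2 (-a * (x - 1) / (x + a)) + Li2 ((x - 1) / (x + a)) := by
  rcases eq_or_lt_of_le ha with rfl | ha'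
  · -- a = -1 case
    norm_num
    rw [Li2_one]
    have h3 : x + -1 = x - 1 := by ring
    rw [h3, div_self (by linarith : x - 1 ≠ 0), Real.log_one]
    ring
  · -- main case
    set G : ℝ → ℝ := fun t => Li2 (-a/t) - Li2 (1/t) + Real.pi ^ 2 / 6 - Li2 (-a)
      - Real.log t * (Real.log (t+a) - Real.log (t-1))
      + Li2 (-a*(t-1)/(t+a)) - Li2 ((t-1)/(t+a)) with hG
    have hx1 : (0:ℝ) < x - 1 := by linarith
    have hxa : (0:ℝ) < x + a := by linarith
    have hGx : G x = 0 := by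
      have hconst : ∀ y ∈ Ioo (1:ℝ) x, G x = G y := by
        intro y hy
        have key := constant_of_has_deriv_right_zero (f := G) (a := y) (b := x)
          (fun z hz => ((G_hasDerivAt ha' (lt_of_lt_of_le hy.1 hz.1)).continuousAt).continuousWithinAt)
          (fun z hz => ((G_hasDerivAt ha' (lt_of_lt_of_le hy.1 hz.1)).hasDerivWithinAt))
        exact key x ⟨le_of_lt hy.2, le_refl x⟩
      have hlim := G_tendsto ha'
      have hev : (fun _ : ℝ => G x) =ᶠ[𝓝[>] (1:ℝ)] G := by
        filter_upwards [Ioo_mem_nhdsGT_of_mem ⟨le_refl 1, hx⟩] with y hy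
        exact hconst y hy
      have : Tendsto (fun _ : ℝ => G x) (𝓝[>] (1:ℝ)) (𝓝 0) := hlim.congr' hev.symm
      exact tendsto_nhds_unique tendsto_const_nhds this
    have hlogdiv : Real.log ((x + a) / (x - 1)) = Real.log (x + a) - Real.log (x - 1) :=
      Real.log_div hxa.ne' hx1.ne'
    rw [hlogdiv]
    have := hGx
    rw [hG] at this
    simp only at this
    linarith
end

section
/- For every real a with -1 ≤ a, the three-term fixed-point identity holds: Li₂(-a/(1+√(1+a))) - Li₂(1/(1+√(1+a))) - (1/2)·Li₂(-a) + π²/12 - (1/2)·ln²(1+√(1+a)) = 0. -/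
open Real MeasureTheory Set Filter Topology

namespace Li2Aux

/-- Fixed-up integrand for the dilogarithm. -/
noncomputable def h (t : ℝ) : ℝ := if t = 0 then -1 else Real.log (1 - t) / t

lemma h_eq {t : ℝ} (ht : t ≠ 0) : h t = Real.log (1 - t) / t := if_neg ht

lemma h_zero : h 0 = -1 := if_pos rfl

lemma h_continuousAt {x : ℝ} (hx : x ≠ 1) : ContinuousAt h x := by
  rcases eq_or_ne x 0 with rfl | hx0
  · -- continuity at 0 via the derivative of log(1-t)
    have hd : HasDerivAt (fun t : ℝ => Real.log (1 - t)) (-1) 0 := by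
      have h1 : HasDerivAt (fun t : ℝ => 1 - t) (-1) 0 := by
        simpa using (hasDerivAt_id (0:ℝ)).const_sub 1
      have := (Real.hasDerivAt_log (by norm_num : (1:ℝ) - 0 ≠ 0)).comp 0 h1
      simpa [Function.comp_def] using this
    have hslope : Tendsto (fun t : ℝ => Real.log (1 - t) / t) (𝓝[≠] 0) (𝓝 (-1)) := by
      have := hasDerivAt_iff_tendsto_slope.mp hd
      refine this.congr' ?_
      filter_upwards [self_mem_nhdsWithin] with t ht
      simp [slope_def_field, div_eq_iff, ht]
    have hslope' : Tendsto h (𝓝[≠] 0) (𝓝 (-1)) := by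
      refine hslope.congr' ?_
      filter_upwards [self_mem_nhdsWithin] with t ht
      exact (h_eq ht).symm
    have : Tendsto h (𝓝 0) (𝓝 (-1)) := by
      rw [← nhdsNE_sup_pure (0:ℝ)]
      exact hslope'.sup (by simpa [h_zero] using tendsto_pure_nhds h (0:ℝ))
    simp only [ContinuousAt, h_zero]
    exact this
  · have hc : ContinuousAt (fun t : ℝ => Real.log (1 - t) / t) x := by
      have h1 : ContinuousAt (fun t : ℝ => Real.log (1 - t)) x := by
        have : (1:ℝ) - x ≠ 0 := sub_ne_zero.mpr (Ne.symm hx)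
        exact (Real.continuousAt_log this).comp (by fun_prop)
      exact h1.div continuousAt_id hx0
    refine hc.congr ?_
    filter_upwards [isOpen_ne.mem_nhds hx0] with t ht
    exact (h_eq ht).symm

lemma h_intervalIntegrable {x : ℝ} (hx : x < 1) : IntervalIntegrable h volume 0 x := by
  apply ContinuousOn.intervalIntegrable
  intro t ht
  have : t < 1 := by
    rcases Set.mem_uIcc.mp ht with ⟨_, h2⟩ | ⟨_, h2⟩ <;> linarith
  exact (h_continuousAt (ne_of_lt this)).continuousWithinAt

lemma Li2_eq (x : ℝ) : Li2 x = -∫ t in (0:ℝ)..x, h t := by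
  unfold Li2
  congr 1
  apply intervalIntegral.integral_congr_ae
  have h0 : ∀ᵐ t : ℝ, t ≠ 0 := by
    rw [ae_iff]
    simpa using Real.volume_singleton (a := (0:ℝ))
  filter_upwards [h0] with t ht _
  exact (h_eq ht).symm

lemma Li2_hasDerivAt {x : ℝ} (hx : x < 1) : HasDerivAt Li2 (-(h x)) x := by
  have hF : HasDerivAt (fun u => ∫ t in (0:ℝ)..u, h t) (h x) x := by
    refine intervalIntegral.integral_hasDerivAt_right (h_intervalIntegrable hx) ?_
      (h_continuousAt (ne_of_lt hx))
    exact (ContinuousOn.stronglyMeasurableAtFilter (isOpen_Iio)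
      (fun y hy => (h_continuousAt (ne_of_lt hy)).continuousWithinAt) x hx)
  have : Li2 = fun u => -∫ t in (0:ℝ)..u, h t := funext Li2_eq
  rw [this]
  exact hF.neg

lemma log_one_sub_intervalIntegrable :
    IntervalIntegrable (fun t : ℝ => Real.log (1 - t)) volume (1/2) 1 := by
  have key : IntervalIntegrable (fun t : ℝ => -Real.log (1 - t)) volume (1/2) 1 := by
    apply intervalIntegral.intervalIntegrable_deriv_of_nonneg
      (g := fun t => (1 - t) * Real.log (1 - t) - (1 - t))
    · apply ContinuousOn.sub ?_ (by fun_prop)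
      have : Continuous fun t : ℝ => (1 - t) * Real.log (1 - t) :=
        (Real.continuous_mul_log).comp (by fun_prop)
      exact this.continuousOn
    · intro x hx
      rw [min_def, max_def] at hx
      norm_num at hx
      have h1 : (1:ℝ) - x ≠ 0 := by nlinarith [hx.1, hx.2]
      have hin : HasDerivAt (fun t : ℝ => 1 - t) (-1) x := by
        simpa using (hasDerivAt_id x).const_sub 1
      have hlog : HasDerivAt (fun t : ℝ => Real.log (1 - t)) (-(1-x)⁻¹) x := by
        simpa [Function.comp_def] using (Real.hasDerivAt_log h1).comp x hin
      have := ((hin.mul hlog).sub hin)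
      refine this.congr_deriv ?_
      field_simp
      ring
    · intro x hx
      rw [min_def, max_def] at hx
      norm_num at hx
      have h1 : (1:ℝ) - x ≤ 1 := by linarith [hx.1]
      have h0 : (0:ℝ) < 1 - x := by linarith [hx.2]
      simp only [neg_nonneg]
      exact Real.log_nonpos (by linarith) h1
  have := key.neg
  simp only [Pi.neg_def, neg_neg] at this
  exact this

lemma h_int01 : IntervalIntegrable h volume 0 1 := by
  have A : IntervalIntegrable h volume 0 (1/2) := h_intervalIntegrable (by norm_num)
  have B : IntervalIntegrable h volume (1/2) 1 := by
    have M : IntervalIntegrable (fun t : ℝ => Real.log (1 - t) * t⁻¹) volume (1/2) 1 := by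
      apply log_one_sub_intervalIntegrable.mul_continuousOn
      apply ContinuousOn.inv₀ continuousOn_id
      intro t ht
      rw [Set.uIcc_of_le (by norm_num : (1:ℝ)/2 ≤ 1)] at ht
      have : (0:ℝ) < t := lt_of_lt_of_le (by norm_num) ht.1
      simpa using ne_of_gt this
    rw [intervalIntegrable_iff] at M ⊢
    apply M.congr_fun ?_ measurableSet_uIoc
    intro t ht
    rw [Set.uIoc_of_le (by norm_num : (1:ℝ)/2 ≤ 1)] at ht
    have ht0 : t ≠ 0 := by intro hc; rw [hc] at ht; norm_num at ht
    rw [h_eq ht0, div_eq_mul_inv]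
  exact A.trans B

lemma Li2_series {x : ℝ} (hx0 : 0 ≤ x) (hx1 : x < 1) :
    Li2 x = ∑' n : ℕ, x ^ (n + 1) / ((n : ℝ) + 1) ^ 2 := by
  have hsum : ∀ t ∈ Set.Ioc (0:ℝ) x, HasSum (fun n : ℕ => t ^ n / ((n:ℝ) + 1)) (-(h t)) := by
    intro t ht
    have habs : |t| < 1 := by
      rw [abs_of_pos ht.1]; exact lt_of_le_of_lt ht.2 hx1
    have ht0 : t ≠ 0 := ne_of_gt ht.1
    have h2 := (hasSum_pow_div_log_of_abs_lt_one habs).div_const t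
    rw [h_eq ht0, neg_div] at *
    have e : (fun n : ℕ => t ^ n / ((n:ℝ) + 1)) = fun i : ℕ => t ^ (i + 1) / ((i:ℝ) + 1) / t := by
      funext n
      field_simp
      ring
    rw [e]
    exact h2
  have int_pow : ∀ n : ℕ, (∫ t in Set.Ioc (0:ℝ) x, t ^ n / ((n:ℝ)+1))
      = x ^ (n+1) / ((n:ℝ)+1)^2 := by
    intro n
    rw [← intervalIntegral.integral_of_le hx0, intervalIntegral.integral_div,
      integral_pow]
    rw [zero_pow n.succ_ne_zero, sub_zero, div_div, ← pow_two]
  have hF_int : ∀ n : ℕ, Integrable (fun t => t ^ n / ((n:ℝ)+1))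
      (volume.restrict (Set.Ioc (0:ℝ) x)) := by
    intro n
    apply Continuous.integrableOn_Ioc
    fun_prop
  have hF_sum : Summable (fun n : ℕ => ∫ t in Set.Ioc (0:ℝ) x, ‖t ^ n / ((n:ℝ)+1)‖) := by
    have heq : ∀ n : ℕ, (∫ t in Set.Ioc (0:ℝ) x, ‖t ^ n / ((n:ℝ)+1)‖)
        = x ^ (n+1) / ((n:ℝ)+1)^2 := by
      intro n
      rw [← int_pow n]
      apply setIntegral_congr_fun measurableSet_Ioc
      intro t ht
      exact Real.norm_of_nonneg (div_nonneg (pow_nonneg ht.1.le n) (by positivity))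
    simp_rw [heq]
    have base : Summable (fun n : ℕ => 1 / ((n:ℝ)+1)^2) := by
      have h2 := (summable_nat_add_iff 1).mpr (summable_one_div_nat_pow.mpr (le_refl 2))
      simpa using h2
    apply Summable.of_nonneg_of_le (fun n => by positivity) (fun n => ?_) base
    have hp : x ^ (n+1) ≤ 1 := pow_le_one₀ hx0 hx1.le
    gcongr
  have key := integral_tsum_of_summable_integral_norm hF_int hF_sum
  have LHS : Li2 x = ∫ t in Set.Ioc (0:ℝ) x, (-(h t)) := by
    rw [Li2_eq, ← intervalIntegral.integral_neg, intervalIntegral.integral_of_le hx0]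
  rw [LHS]
  rw [← setIntegral_congr_fun measurableSet_Ioc (fun t ht => ((hsum t ht).tsum_eq).symm : Set.EqOn _ _ _)] at *
  rw [← key]
  congr 1
  funext n
  exact int_pow n

lemma Li2_continuousOn : ContinuousOn Li2 (Set.Icc 0 1) := by
  have hP : ContinuousOn (fun b => ∫ t in (0:ℝ)..b, h t) (Set.uIcc (0:ℝ) 1) :=
    intervalIntegral.continuousOn_primitive_interval' h_int01 Set.left_mem_uIcc
  have : Li2 = fun b => -∫ t in (0:ℝ)..b, h t := funext Li2_eq
  rw [this, Set.uIcc_of_le (by norm_num : (0:ℝ) ≤ 1)] at *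
  exact hP.neg

lemma Li2_one : Li2 1 = Real.pi ^ 2 / 6 := by
  have hS : HasSum (fun n : ℕ => 1 / ((n:ℝ)+1)^2) (Real.pi ^ 2 / 6) := by
    have h2 := (hasSum_nat_add_iff (f := fun n : ℕ => (1:ℝ) / (n:ℝ)^2) 1).mpr
      (by simpa using hasSum_zeta_two)
    simpa using h2
  haveI : (𝓝[Set.Ico (0:ℝ) 1] 1).NeBot := right_nhdsWithin_Ico_neBot (by norm_num)
  have lim1 : Tendsto Li2 (𝓝[Set.Ico (0:ℝ) 1] 1) (𝓝 (Li2 1)) := by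
    exact (Li2_continuousOn 1 (by norm_num)).mono Set.Ico_subset_Icc_self
  have lim2 : Tendsto Li2 (𝓝[Set.Ico (0:ℝ) 1] 1) (𝓝 (Real.pi ^ 2 / 6)) := by
    have main : Tendsto (fun x : ℝ => ∑' n : ℕ, x ^ (n+1) / ((n:ℝ)+1)^2)
        (𝓝[Set.Ico (0:ℝ) 1] 1) (𝓝 (Real.pi ^ 2 / 6)) := by
      rw [← hS.tsum_eq]
      apply tendsto_tsum_of_dominated_convergence (bound := fun n : ℕ => 1 / ((n:ℝ)+1)^2)
        hS.summable
      · intro k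
        have hc : ContinuousAt (fun x : ℝ => x ^ (k+1) / ((k:ℝ)+1)^2) 1 := by fun_prop
        have := hc.tendsto.mono_left (nhdsWithin_le_nhds (s := Set.Ico (0:ℝ) 1))
        simpa using this
      · filter_upwards [self_mem_nhdsWithin] with x hx k
        have h1 : |x ^ (k+1) / ((k:ℝ)+1)^2| = x ^ (k+1) / ((k:ℝ)+1)^2 :=
          abs_of_nonneg (div_nonneg (pow_nonneg hx.1 _) (by positivity))
        rw [Real.norm_eq_abs, h1]
        have hp : x ^ (k+1) ≤ 1 := pow_le_one₀ hx.1 hx.2.le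
        gcongr
    refine Filter.Tendsto.congr' ?_ main
    filter_upwards [self_mem_nhdsWithin] with x hx
    exact (Li2_series hx.1 hx.2).symm
  exact tendsto_nhds_unique lim1 lim2

noncomputable def F (s : ℝ) : ℝ :=
  Li2 (1 - s) - Li2 (1 / (1 + s)) - (1/2) * Li2 (1 - s ^ 2)
    + Real.pi ^ 2 / 12 - (1/2) * (Real.log (1 + s)) ^ 2

lemma F_hasDerivAt {s : ℝ} (hs : 0 < s) : HasDerivAt F 0 s := by
  have hs1 : (0:ℝ) < 1 + s := by linarith
  have hne : (1:ℝ) + s ≠ 0 := ne_of_gt hs1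
  have A : HasDerivAt (fun x : ℝ => Li2 (1 - x)) (-(h (1 - s)) * (-1)) s := by
    have hin : HasDerivAt (fun x : ℝ => 1 - x) (-1) s := by
      simpa using (hasDerivAt_id s).const_sub 1
    exact (Li2_hasDerivAt (by linarith : 1 - s < 1)).comp s hin
  have hinv : HasDerivAt (fun x : ℝ => 1 / (1 + x)) (-(1 / (1 + s) ^ 2)) s := by
    have h1 : HasDerivAt (fun x : ℝ => 1 + x) 1 s := by
      simpa using (hasDerivAt_id s).const_add 1
    have := h1.inv hne
    simpa [one_div, neg_div, Pi.inv_def] using this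
  have hu : 1 / (1 + s) < 1 := by
    rw [div_lt_one hs1]; linarith
  have B : HasDerivAt (fun x : ℝ => Li2 (1 / (1 + x)))
      (-(h (1 / (1 + s))) * (-(1 / (1 + s) ^ 2))) s :=
    HasDerivAt.comp (h₂ := Li2) s (Li2_hasDerivAt hu) hinv
  have hin2 : HasDerivAt (fun x : ℝ => 1 - x ^ 2) (-(2 * s ^ 1)) s := by
    simpa using (hasDerivAt_pow 2 s).const_sub 1
  have C : HasDerivAt (fun x : ℝ => Li2 (1 - x ^ 2))
      (-(h (1 - s ^ 2)) * (-(2 * s ^ 1))) s :=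
    HasDerivAt.comp (h₂ := Li2) s (Li2_hasDerivAt (by nlinarith : 1 - s ^ 2 < 1)) hin2
  have hlog : HasDerivAt (fun x : ℝ => Real.log (1 + x)) ((1 + s)⁻¹) s := by
    have h1 : HasDerivAt (fun x : ℝ => 1 + x) 1 s := by
      simpa using (hasDerivAt_id s).const_add 1
    simpa [Function.comp_def] using (Real.hasDerivAt_log hne).comp s h1
  have hpow := hlog.pow 2
  have total := ((((A.sub B).sub (C.const_mul (1/2 : ℝ))).add_const
    (Real.pi ^ 2 / 12)).sub (hpow.const_mul (1/2 : ℝ)))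
  have : F = fun x : ℝ => Li2 (1 - x) - Li2 (1 / (1 + x)) - 1/2 * Li2 (1 - x ^ 2)
      + Real.pi ^ 2 / 12 - 1/2 * (Real.log (1 + x)) ^ 2 := rfl
  rw [this]
  refine total.congr_deriv (Eq.symm ?_)
  rcases eq_or_ne s 1 with rfl | hs1'
  · norm_num [h_zero, h_eq, Real.log_inv]
    rw [show (1:ℝ)/2 = 2⁻¹ by norm_num, Real.log_inv]
    ring
  · have hsne : s ≠ 0 := ne_of_gt hs
    have h1s : (1:ℝ) - s ≠ 0 := sub_ne_zero.mpr (Ne.symm hs1')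
    have h1s2 : (1:ℝ) - s ^ 2 ≠ 0 := by
      intro hc
      have : s ^ 2 = 1 := by linarith
      have : s = 1 := by nlinarith
      exact hs1' this
    have e1 : h (1 - s) = Real.log s / (1 - s) := by
      rw [h_eq h1s]; norm_num
    have e2 : h (1 / (1 + s)) = (Real.log s - Real.log (1 + s)) * (1 + s) := by
      have hu0 : 1 / (1 + s) ≠ 0 := by positivity
      rw [h_eq hu0]
      have : (1:ℝ) - 1 / (1 + s) = s / (1 + s) := by field_simp; ring
      rw [this, Real.log_div hsne hne]
      field_simp
    have e3 : h (1 - s ^ 2) = 2 * Real.log s / (1 - s ^ 2) := by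
      rw [h_eq h1s2]
      have : (1:ℝ) - (1 - s ^ 2) = s ^ 2 := by ring
      rw [this, Real.log_pow]
      norm_num
    rw [e1, e2, e3]
    field_simp
    ring

lemma F_const {u v : ℝ} (hu : 0 < u) (huv : u ≤ v) : F v = F u := by
  have hcont : ContinuousOn F (Set.Icc u v) := fun x hx =>
    ((F_hasDerivAt (lt_of_lt_of_le hu hx.1)).continuousAt).continuousWithinAt
  have hderiv : ∀ x ∈ Set.Ico u v, HasDerivWithinAt F 0 (Set.Ici x) x := fun x hx =>
    (F_hasDerivAt (lt_of_lt_of_le hu hx.1)).hasDerivWithinAt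
  exact constant_of_has_deriv_right_zero hcont hderiv v (Set.right_mem_Icc.mpr huv)

lemma F_continuousOn : ContinuousOn F (Set.Icc 0 1) := by
  have c1 : ContinuousOn (fun x : ℝ => Li2 (1 - x)) (Set.Icc 0 1) := by
    apply Li2_continuousOn.comp (by fun_prop)
    intro x hx
    exact ⟨by linarith [hx.2], by linarith [hx.1]⟩
  have c2 : ContinuousOn (fun x : ℝ => Li2 (1 / (1 + x))) (Set.Icc 0 1) := by
    apply Li2_continuousOn.comp
    · apply ContinuousOn.div continuousOn_const (by fun_prop)
      intro x hx
      have : (0:ℝ) < 1 + x := by linarith [hx.1]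
      exact ne_of_gt this
    · intro x hx
      have h0 : (0:ℝ) < 1 + x := by linarith [hx.1]
      constructor
      · positivity
      · rw [div_le_one h0]; linarith [hx.1]
  have c3 : ContinuousOn (fun x : ℝ => Li2 (1 - x ^ 2)) (Set.Icc 0 1) := by
    apply Li2_continuousOn.comp (by fun_prop)
    intro x hx
    obtain ⟨hx1, hx2⟩ := hx
    show 1 - x ^ 2 ∈ Set.Icc (0:ℝ) 1
    constructor
    · nlinarith [mul_nonneg (by linarith : (0:ℝ) ≤ 1 - x)
        (by linarith : (0:ℝ) ≤ 1 + x)]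
    · nlinarith [sq_nonneg x]
  have c4 : ContinuousOn (fun x : ℝ => Real.log (1 + x)) (Set.Icc 0 1) := by
    intro x hx
    have : (1:ℝ) + x ≠ 0 := by have := hx.1; positivity
    exact (ContinuousAt.continuousWithinAt
      ((Real.continuousAt_log this).comp (by fun_prop)))
  exact ((((c1.sub c2).sub (c3.const_smul (1/2:ℝ))).add continuousOn_const).sub
    ((c4.pow 2).const_smul (1/2:ℝ)))

lemma F_zero {s : ℝ} (hs : 0 ≤ s) : F s = 0 := by
  have hF0 : F 0 = 0 := by
    unfold F
    norm_num [Li2_one]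
    ring
  rcases eq_or_lt_of_le hs with rfl | hpos
  · exact hF0
  · have hconst : ∀ u ∈ Set.Ioc (0:ℝ) 1, F u = F s := by
      intro u hu
      rcases le_total u s with hle | hle
      · exact (F_const hu.1 hle).symm
      · exact F_const hpos hle
    haveI : (𝓝[Set.Ioc (0:ℝ) 1] 0).NeBot := left_nhdsWithin_Ioc_neBot (by norm_num)
    have lim1 : Tendsto F (𝓝[Set.Ioc (0:ℝ) 1] 0) (𝓝 (F 0)) :=
      (F_continuousOn 0 (by norm_num)).mono Set.Ioc_subset_Icc_self
    have lim2 : Tendsto F (𝓝[Set.Ioc (0:ℝ) 1] 0) (𝓝 (F s)) := by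
      refine Tendsto.congr' ?_ tendsto_const_nhds
      filter_upwards [self_mem_nhdsWithin] with u hu
      exact (hconst u hu).symm
    have h02 := tendsto_nhds_unique lim1 lim2
    rw [h02] at hF0
    exact hF0

end Li2Aux

theorem fixed_point_identity (a : ℝ) (ha : -1 ≤ a) :
    Li2 (-a / (1 + Real.sqrt (1 + a))) - Li2 (1 / (1 + Real.sqrt (1 + a)))
      - (1/2) * Li2 (-a) + Real.pi ^ 2 / 12
      - (1/2) * (Real.log (1 + Real.sqrt (1 + a))) ^ 2 = 0 := by
  have h1a : (0:ℝ) ≤ 1 + a := by linarith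
  set s := Real.sqrt (1 + a) with hsdef
  have hs0 : 0 ≤ s := Real.sqrt_nonneg _
  have hs2 : s ^ 2 = 1 + a := Real.sq_sqrt h1a
  have hne : (1:ℝ) + s ≠ 0 := by positivity
  have e1 : -a / (1 + s) = 1 - s := by
    rw [show -a = (1 - s) * (1 + s) by linear_combination hs2, mul_div_assoc,
      div_self hne, mul_one]
  have e2 : -a = 1 - s ^ 2 := by linarith
  rw [e1, e2]
  exact Li2Aux.F_zero hs0
end

section
/- Li₂(1/3) + (1/2)·Li₂(-3) + (1/2)·ln²(3) = 0. -/
open Real MeasureTheory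

namespace Li2Aux

open Set Filter intervalIntegral
open scoped Topology

lemma f_meas : Measurable (fun t : ℝ => Real.log (1 - t) / t) :=
  (Real.measurable_log.comp (measurable_const.sub measurable_id)).div measurable_id

lemma f_bound (t : ℝ) : |Real.log (1 - t) / t| ≤ |Real.log (1 - t)| + 1 := by
  rcases eq_or_ne t 0 with rfl | h0
  · simp
  rw [abs_div]
  rcases le_or_gt 1 |t| with h1 | h1
  · have : |Real.log (1 - t)| / |t| ≤ |Real.log (1 - t)| := by
      apply div_le_self (abs_nonneg _) h1
    linarith
  · rw [div_le_iff₀ (abs_pos.mpr h0)]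
    rcases lt_or_gt_of_ne h0 with hneg | hpos
    · have hL : 0 ≤ Real.log (1 - t) := Real.log_nonneg (by linarith)
      have habs : |t| = -t := abs_of_neg hneg
      have hts : -t < 1 := by rw [habs] at h1; exact h1
      have hle : Real.log (1 - t) ≤ -t := by
        have := Real.log_le_sub_one_of_pos (show (0:ℝ) < 1 - t by linarith)
        linarith
      rw [abs_of_nonneg hL, habs]
      nlinarith [mul_nonneg hL (show (0:ℝ) ≤ -t by linarith)]
    · have h1' : t < 1 := lt_of_le_of_lt (le_abs_self t) h1
      have hL : Real.log (1 - t) ≤ 0 := Real.log_nonpos (by linarith) (by linarith)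
      have key := Real.one_sub_inv_le_log_of_pos (show (0:ℝ) < 1 - t by linarith)
      have hinv : (1 - t) * (1 - t)⁻¹ = 1 := mul_inv_cancel₀ (by linarith)
      rw [abs_of_nonpos hL, abs_of_pos hpos]
      nlinarith [mul_le_mul_of_nonneg_right
        (show -Real.log (1 - t) ≤ (1 - t)⁻¹ - 1 by linarith)
        (show (0:ℝ) ≤ 1 - t by linarith), hinv]

lemma log_il01 : IntervalIntegrable Real.log volume 0 1 := by
  have hr : IntervalIntegrable (fun x : ℝ => 2 * x ^ (-(1/2) : ℝ)) volume 0 1 :=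
    (intervalIntegrable_rpow' (by norm_num)).const_mul 2
  apply hr.mono_fun Real.measurable_log.aestronglyMeasurable
  filter_upwards [ae_restrict_mem measurableSet_uIoc] with x hx
  rw [Set.uIoc_of_le (by norm_num : (0:ℝ) ≤ 1)] at hx
  obtain ⟨hx0, hx1⟩ := hx
  rw [Real.norm_eq_abs, Real.norm_eq_abs]
  have hlog : Real.log x ≤ 0 := Real.log_nonpos hx0.le hx1
  rw [abs_of_nonpos hlog]
  have h2 : -Real.log x = Real.log x⁻¹ := (Real.log_inv x).symm
  have h3 : Real.log x⁻¹ ≤ (x⁻¹) ^ ((1:ℝ)/2) / (1/2) :=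
    Real.log_le_rpow_div (by positivity) (by norm_num)
  have h4 : (x⁻¹) ^ ((1:ℝ)/2) = x ^ (-(1/2) : ℝ) := by
    rw [Real.inv_rpow hx0.le, ← Real.rpow_neg hx0.le]
  have h5 : (0:ℝ) ≤ x ^ (-(1/2) : ℝ) := Real.rpow_nonneg hx0.le _
  rw [abs_of_nonneg (by positivity : (0:ℝ) ≤ 2 * x ^ (-(1/2) : ℝ))]
  rw [h2]
  calc Real.log x⁻¹ ≤ (x⁻¹) ^ ((1:ℝ)/2) / (1/2) := h3
    _ = 2 * x ^ (-(1/2) : ℝ) := by rw [h4]; ring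

lemma log_il (a b : ℝ) : IntervalIntegrable Real.log volume a b := by
  suffices h : ∀ c : ℝ, IntervalIntegrable Real.log volume 0 c by
    exact ((h a).symm.trans (h b))
  have hpos : ∀ c : ℝ, 0 ≤ c → IntervalIntegrable Real.log volume 0 c := by
    intro c hc
    rcases le_or_gt c 1 with h1 | h1
    · exact log_il01.mono_set (Set.uIcc_subset_uIcc (by simp) (by
        rw [Set.mem_uIcc]; left; exact ⟨hc, h1⟩))
    · exact log_il01.trans (intervalIntegrable_log (by
        rw [Set.uIcc_of_le h1.le]; intro hmem; exact absurd hmem.1 (by norm_num)))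
  intro c
  rcases le_or_gt 0 c with hc | hc
  · exact hpos c hc
  · have h := (IntervalIntegrable.iff_comp_neg (by simp)).mp (hpos (-c) (by linarith))
    simp only [neg_zero, neg_neg] at h
    apply h.congr
    · intro x _
      exact Real.log_neg_eq_log x

lemma f_il (a b : ℝ) : IntervalIntegrable (fun t : ℝ => Real.log (1 - t) / t) volume a b := by
  have hlog : IntervalIntegrable (fun t : ℝ => Real.log (1 - t)) volume a b := by
    have := (log_il (1 - a) (1 - b)).comp_sub_left 1
    simpa using this
  apply IntervalIntegrable.mono_fun (hlog.abs.add intervalIntegrable_const)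
    f_meas.aestronglyMeasurable
  filter_upwards with t
  rw [Real.norm_eq_abs, Real.norm_eq_abs,
    abs_of_nonneg (by positivity : (0:ℝ) ≤ |Real.log (1 - t)| + 1)]
  exact f_bound t

lemma li2_cont : Continuous Li2 :=
  (intervalIntegral.continuous_primitive f_il 0).neg

lemma li2_zero : Li2 0 = 0 := by simp [Li2]

lemma li2_deriv {x : ℝ} (h0 : x ≠ 0) (h1 : x ≠ 1) :
    HasDerivAt Li2 (-(Real.log (1 - x) / x)) x := by
  have h1x : (1 : ℝ) - x ≠ 0 := sub_ne_zero_of_ne (Ne.symm h1)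
  have hc : ContinuousAt (fun t : ℝ => Real.log (1 - t) / t) x := by
    apply ContinuousAt.div
    · exact (Real.continuousAt_log h1x).comp ((continuous_const.sub continuous_id).continuousAt)
    · exact continuousAt_id
    · exact h0
  exact (intervalIntegral.integral_hasDerivAt_right (f_il 0 x)
    f_meas.stronglyMeasurable.stronglyMeasurableAtFilter hc).neg

lemma li2_comp_deriv {u : ℝ → ℝ} {u' : ℝ} {x : ℝ} (hu : HasDerivAt u u' x)
    (h0 : u x ≠ 0) (h1 : u x ≠ 1) :
    HasDerivAt (fun y => Li2 (u y)) (-(Real.log (1 - u x) / u x) * u') x :=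
  (li2_deriv h0 h1).comp x hu

/-- If `F` is continuous on `[a,b]` and has zero derivative on `(a,b)`, then `F b = F a`. -/
lemma const_of_deriv_zero {F : ℝ → ℝ} {a b : ℝ} (hab : a < b)
    (hcont : ContinuousOn F (Set.Icc a b))
    (hder : ∀ x ∈ Set.Ioo a b, HasDerivAt F 0 x) : F b = F a := by
  have key : ∀ x ∈ Set.Ioc a b, F b = F x := by
    intro x hx
    have := constant_of_has_deriv_right_zero
      (hcont.mono (Set.Icc_subset_Icc hx.1.le le_rfl))
      (fun y hy => (hder y ⟨lt_of_lt_of_le hx.1 hy.1, hy.2⟩).hasDerivWithinAt)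
    exact this b (Set.right_mem_Icc.mpr hx.2)
  haveI : (𝓝[Set.Ioc a b] a).NeBot := by
    apply mem_closure_iff_nhdsWithin_neBot.mp
    rw [closure_Ioc hab.ne]
    exact Set.left_mem_Icc.mpr hab.le
  have h1 : Tendsto F (𝓝[Set.Ioc a b] a) (𝓝 (F a)) :=
    (hcont a (Set.left_mem_Icc.mpr hab.le)).mono_left
      (nhdsWithin_mono _ Set.Ioc_subset_Icc_self)
  have h2 : Tendsto F (𝓝[Set.Ioc a b] a) (𝓝 (F b)) := by
    apply Tendsto.congr' _ tendsto_const_nhds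
    filter_upwards [self_mem_nhdsWithin] with x hx
    exact key x hx
  exact tendsto_nhds_unique h2 h1

/-- Duplication consequence : Li2 1 + 2 * Li2 (-1) = 0. -/
lemma dup : Li2 1 + 2 * Li2 (-1) = 0 := by
  set G : ℝ → ℝ := fun x => Li2 (x ^ 2) - 2 * Li2 x - 2 * Li2 (-x) with hG
  have hcont : ContinuousOn G (Set.Icc 0 1) := by
    apply Continuous.continuousOn
    exact ((li2_cont.comp (continuous_pow 2)).sub
      (continuous_const.mul li2_cont)).sub
      (continuous_const.mul (li2_cont.comp continuous_neg))
  have hder : ∀ x ∈ Set.Ioo (0:ℝ) 1, HasDerivAt G 0 x := by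
    intro y hy
    obtain ⟨hy0, hy1⟩ := hy
    have hy0' : y ≠ 0 := ne_of_gt hy0
    have h1y : (0:ℝ) < 1 - y := by linarith
    have h1 : HasDerivAt (fun x : ℝ => Li2 (x ^ 2))
        (-(Real.log (1 - y ^ 2) / y ^ 2) * (2 * y ^ 1)) y := by
      exact li2_comp_deriv (hasDerivAt_pow 2 y) (pow_ne_zero _ hy0')
        (by nlinarith)
    have h2 : HasDerivAt Li2 (-(Real.log (1 - y) / y)) y := li2_deriv hy0' (by linarith)
    have h3 : HasDerivAt (fun x : ℝ => Li2 (-x))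
        (-(Real.log (1 - (-y)) / (-y)) * (-1)) y :=
      li2_comp_deriv (hasDerivAt_neg y) (by simpa using hy0') (by linarith)
    have htot := (h1.sub (h2.const_mul 2)).sub (h3.const_mul 2)
    have hval : -(Real.log (1 - y ^ 2) / y ^ 2) * (2 * y ^ 1)
        - 2 * -(Real.log (1 - y) / y)
        - 2 * (-(Real.log (1 - (-y)) / (-y)) * (-1)) = 0 := by
      have e : Real.log (1 - y ^ 2) = Real.log (1 - y) + Real.log (1 + y) := by
        rw [show (1:ℝ) - y ^ 2 = (1 - y) * (1 + y) by ring,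
          Real.log_mul (by linarith) (by linarith)]
      have e2 : (1:ℝ) - (-y) = 1 + y := by ring
      rw [e, e2]
      field_simp
      ring
    rw [hval] at htot
    exact htot
  have := const_of_deriv_zero (by norm_num) hcont hder
  have h0 : G 0 = 0 := by simp [hG, li2_zero]
  have h1 : G 1 = Li2 1 - 2 * Li2 1 - 2 * Li2 (-1) := by norm_num [hG]
  rw [h0, h1] at this
  linarith

lemma tendsto_loglog :
    Tendsto (fun x : ℝ => Real.log x * Real.log (1 - x)) (𝓝[<] (1:ℝ)) (𝓝 0) := by
  have h1 : Tendsto (fun x : ℝ => Real.log x / (x - 1)) (𝓝[<] (1:ℝ)) (𝓝 1) := by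
    have hs := hasDerivAt_iff_tendsto_slope.mp (Real.hasDerivAt_log one_ne_zero)
    rw [show ((1:ℝ)⁻¹) = 1 by norm_num] at hs
    have hmono : 𝓝[<] (1:ℝ) ≤ 𝓝[≠] (1:ℝ) :=
      nhdsWithin_mono _ (fun x hx => ne_of_lt hx)
    apply (hs.mono_left hmono).congr
    intro x
    rw [slope_def_field, Real.log_one, sub_zero]
  have h3 : Tendsto (fun u : ℝ => Real.log u * u) (𝓝[>] (0:ℝ)) (𝓝 0) := by
    have := tendsto_log_mul_rpow_nhdsGT_zero one_pos
    apply this.congr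
    intro x
    rw [Real.rpow_one]
  have h4 : Tendsto (fun x : ℝ => 1 - x) (𝓝[<] (1:ℝ)) (𝓝[>] (0:ℝ)) := by
    rw [tendsto_nhdsWithin_iff]
    constructor
    · have hc : Continuous (fun x : ℝ => 1 - x) := continuous_const.sub continuous_id
      have : Tendsto (fun x : ℝ => 1 - x) (𝓝 1) (𝓝 0) := by
        simpa using hc.tendsto (1:ℝ)
      exact this.mono_left nhdsWithin_le_nhds
    · filter_upwards [self_mem_nhdsWithin] with x hx
      simp only [Set.mem_Iio] at hx
      simp only [Set.mem_Ioi]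
      linarith
  have h2 : Tendsto (fun x : ℝ => (x - 1) * Real.log (1 - x)) (𝓝[<] (1:ℝ)) (𝓝 0) := by
    have := (h3.comp h4).neg
    simp only [neg_zero] at this
    apply this.congr
    intro x
    simp only [Function.comp_apply]
    ring
  have hmul := h1.mul h2
  rw [show (1:ℝ) * 0 = 0 by ring] at hmul
  apply hmul.congr'
  filter_upwards [self_mem_nhdsWithin] with x hx
  simp only [Set.mem_Iio] at hx
  have : x - 1 ≠ 0 := by intro h; linarith [sub_eq_zero.mp h]
  field_simp

/-- Reflection: Li2 (1/3) + Li2 (2/3) + log(1/3) * log(2/3) = Li2 1. -/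
lemma refl : Li2 (1/3) + Li2 (2/3) + Real.log (1/3) * Real.log (2/3) = Li2 1 := by
  set F : ℝ → ℝ := fun x => Li2 x + Li2 (1 - x) + Real.log x * Real.log (1 - x) with hF
  have hcont : ContinuousOn F (Set.Icc (1/3) 1) := by
    intro x hx
    obtain ⟨hx1, hx2⟩ := hx
    rcases eq_or_lt_of_le hx2 with rfl | hx2'
    · -- continuity at 1 within the interval
      have hA : ContinuousWithinAt (fun x : ℝ => Li2 x + Li2 (1 - x)) (Set.Icc (1/3) 1) 1 :=
        ((li2_cont.add (li2_cont.comp (continuous_const.sub continuous_id))).continuousAt).continuousWithinAt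
      have hB : ContinuousWithinAt (fun x : ℝ => Real.log x * Real.log (1 - x))
          (Set.Icc (1/3) 1) 1 := by
        rw [← continuousWithinAt_diff_self]
        unfold ContinuousWithinAt
        rw [show (fun x : ℝ => Real.log x * Real.log (1 - x)) 1 = 0 by norm_num]
        apply tendsto_loglog.mono_left
        apply nhdsWithin_mono
        intro z hz
        simp only [Set.mem_diff, Set.mem_Icc, Set.mem_singleton_iff] at hz
        exact lt_of_le_of_ne hz.1.2 hz.2
      exact hA.add hB
    · apply ContinuousWithinAt.add
      · exact (li2_cont.add (li2_cont.comp (continuous_const.sub continuous_id))).continuousAt.continuousWithinAt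
      · apply ContinuousAt.continuousWithinAt
        apply ContinuousAt.mul
        · exact Real.continuousAt_log (by linarith)
        · exact (Real.continuousAt_log (by intro h; nlinarith [sub_eq_zero.mp h])).comp
            ((continuous_const.sub continuous_id).continuousAt)
  have hder : ∀ x ∈ Set.Ioo ((1:ℝ)/3) 1, HasDerivAt F 0 x := by
    intro y hy
    obtain ⟨hy1, hy2⟩ := hy
    have hy0 : y ≠ 0 := by intro h; rw [h] at hy1; norm_num at hy1
    have hy0' : (0:ℝ) < y := by linarith
    have h1y : (0:ℝ) < 1 - y := by linarith
    have h1 : HasDerivAt Li2 (-(Real.log (1 - y) / y)) y := li2_deriv hy0 (by linarith)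
    have h2 : HasDerivAt (fun x : ℝ => Li2 (1 - x))
        (-(Real.log (1 - (1 - y)) / (1 - y)) * (-1)) y := by
      exact li2_comp_deriv ((hasDerivAt_id y).const_sub 1) (by intro h; nlinarith)
        (by intro h; nlinarith)
    have h3 : HasDerivAt (fun x : ℝ => Real.log x * Real.log (1 - x))
        (y⁻¹ * Real.log (1 - y) + Real.log y * ((1 - y)⁻¹ * (-1))) y := by
      apply HasDerivAt.mul (Real.hasDerivAt_log hy0)
      exact (Real.hasDerivAt_log (by linarith)).comp y ((hasDerivAt_id y).const_sub 1)
    have htot := (h1.add h2).add h3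
    have hval : -(Real.log (1 - y) / y) + -(Real.log (1 - (1 - y)) / (1 - y)) * (-1)
        + (y⁻¹ * Real.log (1 - y) + Real.log y * ((1 - y)⁻¹ * (-1))) = 0 := by
      rw [show (1:ℝ) - (1 - y) = y by ring]
      field_simp
      ring
    rw [hval] at htot
    exact htot
  have := const_of_deriv_zero (by norm_num) hcont hder
  have h1 : F 1 = Li2 1 := by norm_num [hF, li2_zero]
  have h2 : F (1/3) = Li2 (1/3) + Li2 (2/3) + Real.log (1/3) * Real.log (2/3) := by
    norm_num [hF]
  rw [h1, h2] at this
  linarith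

/-- Abel five-term instance:
`Li2 (1/3) + Li2 (-3) - 2 Li2 (-1) - Li2 (2/3) + log 3 * log 2 = 0`. -/
lemma abel : Li2 (1/3) + Li2 (-3) - 2 * Li2 (-1) - Li2 (2/3)
    + Real.log 3 * Real.log 2 = 0 := by
  set F : ℝ → ℝ := fun x => Li2 x + Li2 (-3) - Li2 (-3 * x) - Li2 (4 * x / (1 + 3 * x))
    - Li2 (-3 * (1 - x) / (1 + 3 * x))
    - (Real.log (1 - x) - Real.log (1 + 3 * x)) * (Real.log 4 - Real.log (1 + 3 * x)) with hF
  have hcont : ContinuousOn F (Set.Icc 0 (1/3)) := by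
    have hden : ∀ x ∈ Set.Icc (0:ℝ) (1/3), (1:ℝ) + 3 * x ≠ 0 := by
      intro x hx h
      obtain ⟨h1, h2⟩ := hx
      nlinarith
    have h1x : ∀ x ∈ Set.Icc (0:ℝ) (1/3), (1:ℝ) - x ≠ 0 := by
      intro x hx h
      obtain ⟨h1, h2⟩ := hx
      nlinarith
    have c1 : ContinuousOn (fun x : ℝ => 1 + 3 * x) (Set.Icc 0 (1/3)) :=
      (continuous_const.add (continuous_const.mul continuous_id)).continuousOn
    exact (((((li2_cont.continuousOn.add continuousOn_const).sub
      (li2_cont.comp (continuous_const.mul continuous_id)).continuousOn).sub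
      (li2_cont.comp_continuousOn
        (((continuous_const.mul continuous_id).continuousOn).div c1 hden))).sub
      (li2_cont.comp_continuousOn
        (((continuous_const.mul (continuous_const.sub continuous_id)).continuousOn).div
          c1 hden))).sub
      (((ContinuousOn.log (continuous_const.sub continuous_id).continuousOn h1x).sub
        (c1.log hden)).mul (continuousOn_const.sub (c1.log hden))))
  have hder : ∀ x ∈ Set.Ioo (0:ℝ) (1/3), HasDerivAt F 0 x := by
    intro y hy
    obtain ⟨hy0, hy3⟩ := hy
    have hd : (0:ℝ) < 1 + 3 * y := by linarith
    have hd' : (1:ℝ) + 3 * y ≠ 0 := ne_of_gt hd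
    have h1y : (0:ℝ) < 1 - y := by linarith
    -- derivative of Li2 x
    have h1 : HasDerivAt Li2 (-(Real.log (1 - y) / y)) y := li2_deriv (ne_of_gt hy0) (by linarith)
    have hlin : HasDerivAt (fun x : ℝ => 1 + 3 * x) 3 y := by
      simpa using ((hasDerivAt_id y).const_mul 3).const_add 1
    have h1my : HasDerivAt (fun x : ℝ => 1 - x) (-1) y := by
      simpa using (hasDerivAt_id y).const_sub 1
    -- derivative of Li2 (-3x)
    have hm3 : HasDerivAt (fun x : ℝ => -3 * x) (-3) y := by
      simpa using (hasDerivAt_id y).const_mul (-3)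
    have h2 : HasDerivAt (fun x : ℝ => Li2 (-3 * x))
        (-(Real.log (1 - (-3 * y)) / (-3 * y)) * (-3)) y := by
      exact li2_comp_deriv hm3 (by intro h; nlinarith)
        (by intro h; nlinarith)
    -- derivative of Li2 (4x/(1+3x))
    have hu : HasDerivAt (fun x : ℝ => 4 * x / (1 + 3 * x))
        ((4 * (1 + 3 * y) - 4 * y * 3) / (1 + 3 * y) ^ 2) y := by
      have h4x : HasDerivAt (fun x : ℝ => 4 * x) 4 y := by
        simpa using (hasDerivAt_id y).const_mul 4
      have := h4x.div hlin hd'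
      exact this
    have h3 : HasDerivAt (fun x : ℝ => Li2 (4 * x / (1 + 3 * x)))
        (-(Real.log (1 - 4 * y / (1 + 3 * y)) / (4 * y / (1 + 3 * y)))
          * ((4 * (1 + 3 * y) - 4 * y * 3) / (1 + 3 * y) ^ 2)) y := by
      apply li2_comp_deriv hu
      · positivity
      · intro h
        rw [div_eq_one_iff_eq hd'] at h
        nlinarith
    -- derivative of Li2 (-3(1-x)/(1+3x))
    have hv : HasDerivAt (fun x : ℝ => -3 * (1 - x) / (1 + 3 * x))
        ((3 * (1 + 3 * y) - -3 * (1 - y) * 3) / (1 + 3 * y) ^ 2) y := by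
      have hnum : HasDerivAt (fun x : ℝ => -3 * (1 - x)) 3 y := by
        have := h1my.const_mul (-3)
        exact this.congr_deriv (by norm_num)
      have := hnum.div hlin hd'
      exact this
    have h4 : HasDerivAt (fun x : ℝ => Li2 (-3 * (1 - x) / (1 + 3 * x)))
        (-(Real.log (1 - -3 * (1 - y) / (1 + 3 * y)) / (-3 * (1 - y) / (1 + 3 * y)))
          * ((3 * (1 + 3 * y) - -3 * (1 - y) * 3) / (1 + 3 * y) ^ 2)) y := by
      apply li2_comp_deriv hv
      · intro h
        rw [div_eq_zero_iff] at h
        rcases h with h | h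
        · nlinarith
        · exact hd' h
      · intro h
        rw [div_eq_one_iff_eq hd'] at h
        nlinarith
    -- derivative of the log product
    have h5 : HasDerivAt (fun x : ℝ =>
        (Real.log (1 - x) - Real.log (1 + 3 * x)) * (Real.log 4 - Real.log (1 + 3 * x)))
        (((1 - y)⁻¹ * (-1) - (1 + 3 * y)⁻¹ * 3) * (Real.log 4 - Real.log (1 + 3 * y))
          + (Real.log (1 - y) - Real.log (1 + 3 * y)) * (0 - (1 + 3 * y)⁻¹ * 3)) y := by
      apply HasDerivAt.mul
      · apply HasDerivAt.sub
        · exact (Real.hasDerivAt_log (by linarith)).comp y h1my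
        · exact (Real.hasDerivAt_log hd').comp y hlin
      · apply HasDerivAt.sub (hasDerivAt_const y _)
        · exact (Real.hasDerivAt_log hd').comp y hlin
    have htot := ((((h1.add (hasDerivAt_const y (Li2 (-3)))).sub h2).sub h3).sub h4).sub h5
    have hval : -(Real.log (1 - y) / y) + 0
        - -(Real.log (1 - (-3 * y)) / (-3 * y)) * (-3)
        - -(Real.log (1 - 4 * y / (1 + 3 * y)) / (4 * y / (1 + 3 * y)))
            * ((4 * (1 + 3 * y) - 4 * y * 3) / (1 + 3 * y) ^ 2)
        - -(Real.log (1 - -3 * (1 - y) / (1 + 3 * y)) / (-3 * (1 - y) / (1 + 3 * y)))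
            * ((3 * (1 + 3 * y) - -3 * (1 - y) * 3) / (1 + 3 * y) ^ 2)
        - (((1 - y)⁻¹ * (-1) - (1 + 3 * y)⁻¹ * 3) * (Real.log 4 - Real.log (1 + 3 * y))
          + (Real.log (1 - y) - Real.log (1 + 3 * y)) * (0 - (1 + 3 * y)⁻¹ * 3)) = 0 := by
      have e1 : (1:ℝ) - (-3 * y) = 1 + 3 * y := by ring
      have e2 : (1:ℝ) - 4 * y / (1 + 3 * y) = (1 - y) / (1 + 3 * y) := by
        field_simp; ring
      have e3 : (1:ℝ) - -3 * (1 - y) / (1 + 3 * y) = 4 / (1 + 3 * y) := by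
        field_simp; ring
      rw [e1, e2, e3, Real.log_div (by linarith) hd', Real.log_div (by norm_num) hd']
      field_simp
      ring
    rw [hval] at htot
    exact htot
  have key := const_of_deriv_zero (by norm_num) hcont hder
  have h0 : F 0 = 0 := by
    simp only [hF]
    norm_num [li2_zero]
  have h13 : F (1/3) = Li2 (1/3) + Li2 (-3) - 2 * Li2 (-1) - Li2 (2/3)
      + Real.log 3 * Real.log 2 := by
    have e1 : (-3 : ℝ) * (1/3) = -1 := by norm_num
    have e2 : (4 : ℝ) * (1/3) / (1 + 3 * (1/3)) = 2/3 := by norm_num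
    have e3 : (-3 : ℝ) * (1 - 1/3) / (1 + 3 * (1/3)) = -1 := by norm_num
    have e4 : (1 : ℝ) - 1/3 = 2/3 := by norm_num
    have e5 : (1 : ℝ) + 3 * (1/3) = 2 := by norm_num
    simp only [hF, e1, e2, e3, e4, e5]
    have l1 : Real.log (2/3) = Real.log 2 - Real.log 3 :=
      Real.log_div (by norm_num) (by norm_num)
    have l2 : Real.log 4 = 2 * Real.log 2 := by
      rw [show (4:ℝ) = 2 ^ 2 by norm_num, Real.log_pow]
      push_cast; ring
    rw [l1, l2]
    ring
  rw [h0, h13] at key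
  linarith

end Li2Aux

theorem Li2_third :
    Li2 (1/3) + (1/2) * Li2 (-3) + (1/2) * (Real.log 3) ^ 2 = 0 := by
  have habel := Li2Aux.abel
  have hrefl := Li2Aux.refl
  have hdup := Li2Aux.dup
  have l1 : Real.log (1/3) = -Real.log 3 := by
    rw [show (1:ℝ)/3 = 3⁻¹ by norm_num, Real.log_inv]
  have l2 : Real.log (2/3) = Real.log 2 - Real.log 3 :=
    Real.log_div (by norm_num) (by norm_num)
  rw [l1, l2] at hrefl
  nlinarith [habel, hrefl, hdup]
end

section
/- For every real s > 1, the improper integral ∫₀^∞ x^s · ln(1/(1 - e^{-x})) dx equals Γ(s+1)·ζ(s+2). -/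
open Real MeasureTheory

theorem integral_pow_mul_log :
    ∀ s : ℝ, 1 < s →
      ∫ x in Set.Ioi (0:ℝ), x ^ s * Real.log (1 / (1 - Real.exp (-x)))
        = Real.Gamma (s + 1) * (riemannZeta ((s : ℂ) + 2)).re := by
  intro s hs
  have hs1 : (0:ℝ) < s + 1 := by linarith
  have hnpos : ∀ n : ℕ, (0:ℝ) < (n:ℝ) + 1 := fun n => by positivity
  set F : ℕ → ℝ → ℝ := fun n x => x ^ s * (Real.exp (-(((n:ℝ) + 1) * x)) / ((n:ℝ) + 1))
    with hF
  -- integrability of each term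
  have hintg : ∀ n : ℕ, IntegrableOn (F n) (Set.Ioi 0) := by
    intro n
    have h : IntegrableOn (fun x : ℝ => x ^ s * Real.exp (-((n:ℝ)+1) * x ^ (1:ℝ)) / ((n:ℝ)+1))
        (Set.Ioi 0) :=
      (integrableOn_rpow_mul_exp_neg_mul_rpow (p := 1) (s := s) (b := (n:ℝ)+1)
        (by linarith) one_pos (hnpos n)).div_const _
    refine h.congr_fun (fun x hx => ?_) measurableSet_Ioi
    simp only [hF, Real.rpow_one, neg_mul, mul_div_assoc]
  -- nonnegativity a.e.
  have hnn : ∀ n : ℕ, 0 ≤ᵐ[volume.restrict (Set.Ioi (0:ℝ))] F n := by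
    intro n
    filter_upwards [ae_restrict_mem measurableSet_Ioi] with x hx
    have hx0 : (0:ℝ) < x := hx
    have : (0:ℝ) ≤ x ^ s := Real.rpow_nonneg hx0.le s
    positivity
  -- value of each integral
  have hint : ∀ n : ℕ, ∫ x in Set.Ioi (0:ℝ), F n x
      = Real.Gamma (s+1) * (1 / ((n:ℝ)+1)) ^ (s+2) := by
    intro n
    have h := Real.integral_rpow_mul_exp_neg_mul_Ioi (a := s+1) (r := (n:ℝ)+1) hs1 (hnpos n)
    simp only [add_sub_cancel_right] at h
    calc ∫ x in Set.Ioi (0:ℝ), F n x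
        = (1/((n:ℝ)+1)) * ∫ x in Set.Ioi (0:ℝ), x ^ s * Real.exp (-(((n:ℝ)+1) * x)) := by
          rw [← integral_const_mul]
          refine setIntegral_congr_fun measurableSet_Ioi fun x hx => ?_
          simp only [hF]; ring
      _ = (1/((n:ℝ)+1)) * ((1/((n:ℝ)+1)) ^ (s+1) * Real.Gamma (s+1)) := by rw [h]
      _ = Real.Gamma (s+1) * (1 / ((n:ℝ)+1)) ^ (s+2) := by
          have hpos : (0:ℝ) < 1/((n:ℝ)+1) := by positivity
          rw [show s + (2:ℝ) = (s+1) + 1 by ring, Real.rpow_add hpos (s+1) 1, Real.rpow_one]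
          ring
  -- summability
  have hsum0 : Summable (fun n : ℕ => (1/((n:ℝ)+1)) ^ (s+2)) := by
    have h1 := (Real.summable_one_div_nat_rpow (p := s+2)).mpr (by linarith)
    have h2 := (summable_nat_add_iff 1).mpr h1
    refine h2.congr fun n => ?_
    simp only [one_div]
    push_cast
    rw [← Real.inv_rpow (by positivity : (0:ℝ) ≤ ((n:ℝ)+1))]
  -- pointwise series expansion
  have hpt : ∀ x ∈ Set.Ioi (0:ℝ), HasSum (fun n => F n x)
      (x ^ s * Real.log (1 / (1 - Real.exp (-x)))) := by
    intro x hx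
    have hx0 : (0:ℝ) < x := hx
    have habs : |Real.exp (-x)| < 1 := by
      rw [abs_of_pos (Real.exp_pos _)]
      calc Real.exp (-x) < Real.exp 0 := Real.exp_lt_exp.mpr (by linarith)
        _ = 1 := Real.exp_zero
    have h := (Real.hasSum_pow_div_log_of_abs_lt_one habs).mul_left (x ^ s)
    rw [one_div, Real.log_inv]
    have heq : (fun n : ℕ => x ^ s * (Real.exp (-x) ^ (n + 1) / (n + 1))) = fun n => F n x := by
      funext n
      rw [← Real.exp_nat_mul]
      simp only [hF]
      push_cast
      ring_nf
    rw [heq] at h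
    exact h
  -- swap sum and integral
  have key : ∫ x in Set.Ioi (0:ℝ), ∑' n, F n x = ∑' n, ∫ x in Set.Ioi (0:ℝ), F n x := by
    refine integral_tsum (fun n => (hintg n).aestronglyMeasurable) ?_
    have hlin : ∀ n : ℕ, ∫⁻ x in Set.Ioi (0:ℝ), ‖F n x‖ₑ
        = ENNReal.ofReal (Real.Gamma (s+1) * (1/((n:ℝ)+1)) ^ (s+2)) := by
      intro n
      rw [← hint n, ofReal_integral_eq_lintegral_ofReal (hintg n) (hnn n)]
      refine lintegral_congr_ae ?_
      filter_upwards [hnn n] with x hx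
      rw [← Real.enorm_eq_ofReal hx]
    simp_rw [hlin]
    rw [← ENNReal.ofReal_tsum_of_nonneg (fun n => by positivity)
      (hsum0.mul_left (Real.Gamma (s+1)))]
    exact ENNReal.ofReal_ne_top
  -- rewrite LHS as integral of tsum
  have hL : ∫ x in Set.Ioi (0:ℝ), x ^ s * Real.log (1 / (1 - Real.exp (-x)))
      = ∫ x in Set.Ioi (0:ℝ), ∑' n, F n x :=
    setIntegral_congr_fun measurableSet_Ioi fun x hx => ((hpt x hx).tsum_eq).symm
  rw [hL, key]
  simp_rw [hint]
  rw [tsum_mul_left]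
  congr 1
  -- the zeta value
  have hz : riemannZeta ((s:ℂ)+2) = ((∑' n : ℕ, (1/((n:ℝ)+1)) ^ (s+2) : ℝ) : ℂ) := by
    rw [zeta_eq_tsum_one_div_nat_add_one_cpow (by simp; linarith), Complex.ofReal_tsum]
    refine tsum_congr fun n => ?_
    have h1 : ((1/((n:ℝ)+1)) ^ (s+2) : ℝ) = (((n:ℝ)+1) ^ (s+2))⁻¹ := by
      rw [one_div, Real.inv_rpow (hnpos n).le]
    rw [h1, Complex.ofReal_inv, Complex.ofReal_cpow (hnpos n).le, one_div]
    push_cast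
    ring_nf
  rw [hz, Complex.ofReal_re]
end
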